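/- E-MAJSAT reduction correctness: Let φ be a Boolean formula in variables x₁, …, xₙ, let 0 ≤ k < n, and let m = 2^{n−k−1}. Work over the natural-number semiring ℕ = (ℕ, +, ·, 0, 1), with variables ranging over the domain {0,1}, and let φ̂(X̄) be a weighted formula such that for every ā ∈ {0,1}ⁿ and every pointed HT-interpretation I_w considered, ⟦φ̂(ā)⟧_ℕ(I_w) = 1 if φ(ā) is true and 0 otherwise. Consider the AC-program Π = { v(0) ←, v(1) ←, f ← v(X₁), …, v(X_k), m <_ℕ v(X_{k+1}) * ⋯ * v(Xₙ) * φ̂(X̄) }, where X_{k+1}, …, Xₙ are local variables of the last rule and X₁, …, X_k are global. Then: {f, v(0), v(1)} is an equilibrium model of Π if and only if there exists an assignment (a₁, …, a_k) ∈ {0,1}^k such that the number of extensions (a_{k+1}, …, aₙ) ∈ {0,1}^{n−k} with φ(a₁,…,aₙ) true is greater than m; and {v(0), v(1)} is an equilibrium model of Π if and only if no such assignment exists. -/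
import Mathlib


/-- The two worlds of HT logic. -/
inductive W : Type | H | T
deriving DecidableEq

/-- `W.le w w'` means `w' ≥ w` in the HT order (with `T ≥ H`). -/
def W.le : W → W → Prop
  | .H, _ => True
  | .T, w' => w' = .T

/-- The ground atoms of the E-MAJSAT program: `v(0), v(1)` (domain `{0,1}`
    encoded as `Bool`) and `f`. -/
inductive GAtom : Type | v (b : Bool) | f
deriving DecidableEq

/-- An HT-interpretation: a pair of sets of atoms with `h ⊆ t`. -/
structure HTI where
  h : Set GAtom
  t : Set GAtom
  sub : h ⊆ t

/-- The component of a pointed HT-interpretation at world `w`. -/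
def HTI.at (I : HTI) : W → Set GAtom
  | .H => I.h
  | .T => I.t

/-- Combine an assignment to `x₁,…,x_k` with an assignment to `x_{k+1},…,x_n`. -/
def comb {n k : ℕ} (hk : k < n) (γ : Fin k → Bool) (lam : Fin (n - k) → Bool) :
    Fin n → Bool :=
  fun i => if h : (i : ℕ) < k then γ ⟨i, h⟩ else lam ⟨(i : ℕ) - k, by omega⟩

open Classical in
/-- `⟦Σ X_{k+1} … X_n  v(X_{k+1}) * ⋯ * v(X_n) * φ̂(X̄)⟧_ℕ(I_w)` for the global
    assignment `γ`: the sum over all assignments `lam` to the local variables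
    (which range over the finite domain `{0,1}`, so the support is finite and the
    sum over the support equals the sum over all assignments) of the product of
    the values of the atoms `v(lam j)` times the value of `φ̂`, which by hypothesis
    is `1` if `φ` is true under the combined assignment and `0` otherwise. -/
noncomputable def sVal {n k : ℕ} (hk : k < n) (φ : (Fin n → Bool) → Bool)
    (I : HTI) (w : W) (γ : Fin k → Bool) : ℕ :=
  ∑ lam : Fin (n - k) → Bool,
    (∏ j : Fin (n - k), if GAtom.v (lam j) ∈ I.at w then 1 else 0) *
      (if φ (comb hk γ lam) = true then 1 else 0)

/-- HT satisfaction of the program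
    `Π = { v(0) ←,  v(1) ←,  f ← v(X₁), …, v(X_k), m <_ℕ v(X_{k+1}) * ⋯ * v(X_n) * φ̂(X̄) }`
    at the pointed interpretation `I_w`, where `m = 2^(n−k−1)`, the global variables
    `X₁,…,X_k` range over the domain `{0,1}`, and the constraint `m <_ℕ α` is
    satisfied at `I_{w'}` iff `m < ⟦α⟧_ℕ(I_{w''})` for all `w'' ≥ w'`. -/
def progSat {n k : ℕ} (hk : k < n) (φ : (Fin n → Bool) → Bool)
    (I : HTI) (w : W) : Prop :=
  (GAtom.v false ∈ I.at w ∧ GAtom.v true ∈ I.at w) ∧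
  ∀ γ : Fin k → Bool, ∀ w', W.le w w' →
    ((∀ i : Fin k, GAtom.v (γ i) ∈ I.at w') ∧
      (∀ w'', W.le w' w'' → 2 ^ (n - k - 1) < sVal hk φ I w'' γ)) →
    GAtom.f ∈ I.at w'

/-- `J` is an equilibrium model of the program. -/
def EqModel {n k : ℕ} (hk : k < n) (φ : (Fin n → Bool) → Bool) (J : Set GAtom) :
    Prop :=
  progSat hk φ ⟨J, J, le_refl J⟩ .H ∧
    ∀ J' (h : J' ⊆ J), J' ≠ J → ¬ progSat hk φ ⟨J', J, h⟩ .H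

open Classical in
/-- The number of extensions `(a_{k+1}, …, a_n)` making `φ` true under `γ`. -/
noncomputable def extCount {n k : ℕ} (hk : k < n) (φ : (Fin n → Bool) → Bool)
    (γ : Fin k → Bool) : ℕ :=
  (Finset.univ.filter (fun lam : Fin (n - k) → Bool => φ (comb hk γ lam) = true)).card

lemma W_le_refl (w : W) : W.le w w := by cases w <;> simp [W.le]

lemma sval_eq {n k : ℕ} (hk : k < n) (φ : (Fin n → Bool) → Bool)
    (I : HTI) (w : W) (γ : Fin k → Bool)
    (hv : ∀ b, GAtom.v b ∈ I.at w) :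
    sVal hk φ I w γ = extCount hk φ γ := by
  classical
  unfold sVal extCount
  rw [Finset.card_filter]
  refine Finset.sum_congr rfl fun lam _ => ?_
  have h1 : (∏ j : Fin (n - k), if GAtom.v (lam j) ∈ I.at w then 1 else 0) = 1 := by
    apply Finset.prod_eq_one
    intro j _
    simp [hv (lam j)]
  rw [h1, one_mul]

/-- **E-MAJSAT reduction correctness**: `{f, v(0), v(1)}` is an equilibrium model
    of the program iff some assignment `γ` to `x₁,…,x_k` has more than
    `m = 2^(n−k−1)` satisfying extensions, and `{v(0), v(1)}` is an equilibrium
    model iff no such assignment exists. -/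
theorem emajsat_reduction {n k : ℕ} (hk : k < n) (φ : (Fin n → Bool) → Bool) :
    (EqModel hk φ {GAtom.f, GAtom.v false, GAtom.v true} ↔
      ∃ γ : Fin k → Bool, 2 ^ (n - k - 1) < extCount hk φ γ)
    ∧ (EqModel hk φ {GAtom.v false, GAtom.v true} ↔
      ¬ ∃ γ : Fin k → Bool, 2 ^ (n - k - 1) < extCount hk φ γ) := by
  classical
  set Jf : Set GAtom := {GAtom.f, GAtom.v false, GAtom.v true} with hJf
  set Jv : Set GAtom := {GAtom.v false, GAtom.v true} with hJv
  have hsub : Jv ⊆ Jf := by intro a ha; simp [hJf, hJv] at ha ⊢; tauto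
  have hne : Jv ≠ Jf := by
    intro h
    have : GAtom.f ∈ Jv := by rw [h]; simp [hJf]
    simp [hJv] at this
  constructor
  · constructor
    · rintro ⟨hsat, hmin⟩ 
      by_contra hno
      push_neg at hno
      apply hmin Jv hsub hne
      refine ⟨by simp [HTI.at, hJv], ?_⟩
      rintro γ w' _ ⟨_, hcon⟩
      exfalso
      have hlt := hcon w' (W_le_refl w')
      have hv : ∀ b, GAtom.v b ∈ (HTI.mk Jv Jf hsub).at w' := by
        intro b; cases w' <;> cases b <;> simp [HTI.at, hJv, hJf]
      rw [sval_eq hk φ _ w' γ hv] at hlt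
      exact absurd hlt (not_lt.mpr (hno γ))
    · rintro ⟨γ, hγ⟩
      constructor
      · refine ⟨⟨by simp [HTI.at, hJf, hJv], by simp [HTI.at, hJf, hJv]⟩, ?_⟩
        intro γ' w' _ _
        cases w' <;> simp [HTI.at, hJf, hJv]
      · rintro J' hs hne' ⟨⟨hvf, hvt⟩, hrule⟩
        simp only [HTI.at] at hvf hvt
        by_cases hf : GAtom.f ∈ J'
        · apply hne'
          apply Set.Subset.antisymm hs
          intro a ha
          simp [hJf, hJv] at ha
          rcases ha with h | h | h <;> subst h <;> assumption
        · apply hf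
          have := hrule γ .H trivial ?_
          · exact this
          constructor
          · intro i; cases h : γ i <;> simp [HTI.at] <;> [exact hvf; exact hvt]
          · intro w'' _
            have hv : ∀ b, GAtom.v b ∈ (HTI.mk J' Jf hs).at w'' := by
              intro b; cases w'' <;> cases b <;> simp [HTI.at, hJf, hJv] <;> assumption
            rw [sval_eq hk φ _ w'' γ hv]
            exact hγ
  · constructor
    · rintro ⟨hsat, _⟩ ⟨γ, hγ⟩
      have := hsat.2 γ .H trivial ?_
      · simp [HTI.at, hJv] at this
      constructor
      · intro i; cases h : γ i <;> simp [HTI.at, hJv]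
      · intro w'' _
        have hv : ∀ b, GAtom.v b ∈ (HTI.mk Jv Jv (le_refl Jv)).at w'' := by
          intro b; cases w'' <;> cases b <;> simp [HTI.at, hJv]
        rw [sval_eq hk φ _ w'' γ hv]
        exact hγ
    · intro hno
      push_neg at hno
      constructor
      · refine ⟨⟨by simp [HTI.at, hJv], by simp [HTI.at, hJv]⟩, ?_⟩
        rintro γ w' _ ⟨_, hcon⟩
        exfalso
        have hlt := hcon w' (W_le_refl w')
        have hv : ∀ b, GAtom.v b ∈ (HTI.mk Jv Jv (le_refl Jv)).at w' := by
          intro b; cases w' <;> cases b <;> simp [HTI.at, hJv]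
        rw [sval_eq hk φ _ w' γ hv] at hlt
        exact absurd hlt (not_lt.mpr (hno γ))
      · rintro J' hs hne' ⟨⟨hvf, hvt⟩, _⟩
        simp only [HTI.at] at hvf hvt
        apply hne'
        apply Set.Subset.antisymm hs
        intro a ha
        simp [hJv] at ha
        rcases ha with h | h <;> subst h <;> assumption
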